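/- An irreducible root system R cannot be contained in the union of two proper linear subspaces of the span of R. That is, if V and W are subspaces of Span(R) with R ⊆ V ∪ W, then V = Span(R) or W = Span(R). -/
import Mathlib


open scoped RealInnerProductSpace

/-- A (reduced) root system: a finite nonempty set of nonzero vectors in a real inner
product space, closed under negation and reflections, with integrality, and reduced. -/
structure IsRootSystem {E : Type*} [NormedAddCommGroup E] [InnerProductSpace ℝ E]
    (R : Set E) : Prop where
  finite : R.Finite
  nonempty : R.Nonempty
  ne_zero : ∀ α ∈ R, α ≠ 0
  neg_mem : ∀ α ∈ R, -α ∈ R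
  reduced : ∀ α ∈ R, ∀ t : ℝ, t • α ∈ R → t = 1 ∨ t = -1
  reflect_mem : ∀ α ∈ R, ∀ β ∈ R, β - (2 * ⟪β, α⟫ / ⟪α, α⟫) • α ∈ R
  integral : ∀ α ∈ R, ∀ β ∈ R, ∃ n : ℤ, 2 * ⟪β, α⟫ / ⟪α, α⟫ = (n : ℝ)

/-- Irreducibility: `R` admits no decomposition into two nonempty mutually
orthogonal parts. -/
def IsIrreducibleRS {E : Type*} [NormedAddCommGroup E] [InnerProductSpace ℝ E]
    (R : Set E) : Prop :=
  ∀ R₁ R₂ : Set E, R₁ ∪ R₂ = R → R₁.Nonempty → R₂.Nonempty →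
    ¬ (∀ α ∈ R₁, ∀ β ∈ R₂, ⟪α, β⟫ = 0)

/-- An irreducible root system cannot be contained in the union of two proper
subspaces of its span. -/
theorem irreducible_not_in_union_of_proper_subspaces
    {E : Type*} [NormedAddCommGroup E] [InnerProductSpace ℝ E]
    (R : Set E) (hR : IsRootSystem R) (hirr : IsIrreducibleRS R)
    (hspan : Submodule.span ℝ R = ⊤)
    (V W : Submodule ℝ E) (hVW : R ⊆ (V : Set E) ∪ (W : Set E)) :
    V = ⊤ ∨ W = ⊤ := by
  by_contra hcon
  push_neg at hcon
  obtain ⟨hV, hW⟩ := hcon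
  have hmem : ∀ x ∈ R, x ∈ V ∨ x ∈ W := fun x hx => hVW hx
  -- there are roots outside W and outside V
  have hA : ∃ α ∈ R, α ∉ W := by
    by_contra h
    push_neg at h
    exact hW (top_le_iff.mp (hspan ▸ Submodule.span_le.mpr (fun x hx => h x hx)))
  have hB : ∃ β ∈ R, β ∉ V := by
    by_contra h
    push_neg at h
    exact hV (top_le_iff.mp (hspan ▸ Submodule.span_le.mpr (fun x hx => h x hx)))
  have hself : ∀ α ∈ R, ⟪α, α⟫ ≠ 0 := fun α hα => by
    simpa [inner_self_eq_zero] using hR.ne_zero α hα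
  -- Lemma 1: a root not in W is orthogonal to a root not in V
  have lem1 : ∀ α ∈ R, α ∉ W → ∀ β ∈ R, β ∉ V → ⟪α, β⟫ = 0 := by
    intro α hα hαW β hβ hβV
    by_contra h
    have hαV : α ∈ V := (hmem α hα).resolve_right hαW
    have hβW : β ∈ W := (hmem β hβ).resolve_left hβV
    set c := 2 * ⟪β, α⟫ / ⟪α, α⟫ with hc
    have hba : ⟪β, α⟫ ≠ 0 := fun h' => h (by rw [real_inner_comm]; exact h')
    have hc0 : c ≠ 0 := div_ne_zero (mul_ne_zero two_ne_zero hba) (hself α hα)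
    have hγ : β - c • α ∈ R := hR.reflect_mem α hα β hβ
    rcases hmem _ hγ with hγV | hγW
    · exact hβV (by simpa using V.add_mem hγV (V.smul_mem c hαV))
    · have hcα : c • α ∈ W := by
        have := W.sub_mem hβW hγW
        simpa using this
      exact hαW (by
        have := W.smul_mem c⁻¹ hcα
        rwa [smul_smul, inv_mul_cancel₀ hc0, one_smul] at this)
  -- Lemma 2: a root in V ∩ W cannot be non-orthogonal to both a root outside W
  -- and a root outside V
  have lem2 : ∀ γ ∈ R, γ ∈ V → γ ∈ W → ∀ α ∈ R, α ∉ W → ∀ β ∈ R, β ∉ V →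
      ⟪γ, α⟫ ≠ 0 → ⟪γ, β⟫ = 0 := by
    intro γ hγ hγV hγW α hα hαW β hβ hβV hγα
    by_contra h
    set c := 2 * ⟪α, γ⟫ / ⟪γ, γ⟫ with hc
    have hag : ⟪α, γ⟫ ≠ 0 := fun h' => hγα (by rw [real_inner_comm]; exact h')
    have hc0 : c ≠ 0 := div_ne_zero (mul_ne_zero two_ne_zero hag) (hself γ hγ)
    have hδ : α - c • γ ∈ R := hR.reflect_mem γ hγ α hα
    have hδW : α - c • γ ∉ W := fun hW' =>
      hαW (by simpa using W.add_mem hW' (W.smul_mem c hγW))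
    have h0 : ⟪α - c • γ, β⟫ = 0 := lem1 _ hδ hδW β hβ hβV
    rw [inner_sub_left, real_inner_smul_left, lem1 α hα hαW β hβ hβV] at h0
    have : c * ⟪γ, β⟫ = 0 := by linarith
    exact h (by rcases mul_eq_zero.mp this with h' | h' <;> [exact absurd h' hc0; exact h'])
  -- Key: any chain of pairwise non-orthogonal roots starting outside V ends in W
  have key : ∀ n : ℕ, ∀ f : ℕ → E, f 0 ∈ R → f 0 ∉ V →
      (∀ i ≤ n, f i ∈ R) → (∀ i < n, ⟪f i, f (i + 1)⟫ ≠ 0) → f n ∈ W := by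
    intro n
    induction n using Nat.strong_induction_on with
    | _ n ih =>
      match n with
      | 0 =>
        intro f h0 h0V _ _
        exact (hmem _ h0).resolve_left h0V
      | 1 =>
        intro f h0 h0V hm hadj
        by_contra h1W
        exact hadj 0 (by norm_num)
          (by rw [real_inner_comm]; exact lem1 _ (hm 1 (by norm_num)) h1W _ h0 h0V)
      | 2 =>
        intro f h0 h0V hm hadj
        by_contra h2W
        by_cases h1V : f 1 ∈ V
        · by_cases h1W : f 1 ∈ W
          · exact hadj 0 (by norm_num) (by
              rw [real_inner_comm]
              exact lem2 _ (hm 1 (by norm_num)) h1V h1W _ (hm 2 (by norm_num)) h2W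
                _ h0 h0V (hadj 1 (by norm_num)))
          · exact hadj 0 (by norm_num)
              (by rw [real_inner_comm]; exact lem1 _ (hm 1 (by norm_num)) h1W _ h0 h0V)
        · exact hadj 1 (by norm_num)
            (by rw [real_inner_comm]
                exact lem1 _ (hm 2 (by norm_num)) h2W _ (hm 1 (by norm_num)) h1V)
      | (n + 3) =>
        intro f h0 h0V hm hadj
        by_cases h02 : ⟪f 0, f 2⟫ = 0
        · by_cases h13 : ⟪f 1, f 3⟫ = 0
          · -- reflect f 2 in f 1 to shorten the chain
            set c := 2 * ⟪f 2, f 1⟫ / ⟪f 1, f 1⟫ with hc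
            have h12 : ⟪f 2, f 1⟫ ≠ 0 := fun h' =>
              hadj 1 (by omega) (by rw [real_inner_comm]; exact h')
            have hc0 : c ≠ 0 :=
              div_ne_zero (mul_ne_zero two_ne_zero h12) (hself _ (hm 1 (by omega)))
            have hδ : f 2 - c • f 1 ∈ R :=
              hR.reflect_mem _ (hm 1 (by omega)) _ (hm 2 (by omega))
            set g : ℕ → E := fun i =>
              if i = 0 then f 0 else if i = 1 then f 2 - c • f 1 else f (i + 1) with hg
            have hgend : g (n + 2) = f (n + 3) := by simp [hg]
            rw [← hgend]
            refine ih (n + 2) (by omega) g (by simpa [hg] using h0) (by simpa [hg] using h0V)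
              ?_ ?_
            · intro i hi
              rcases Nat.lt_or_ge i 2 with h' | h'
              · interval_cases i
                · simpa [hg] using h0
                · simpa [hg] using hδ
              · have : g i = f (i + 1) := by
                  simp only [hg]
                  rw [if_neg (by omega), if_neg (by omega)]
                rw [this]; exact hm (i + 1) (by omega)
            · intro i hi
              rcases Nat.lt_or_ge i 2 with h' | h'
              · interval_cases i
                · have : g 0 = f 0 ∧ g 1 = f 2 - c • f 1 := by simp [hg]
                  rw [this.1, this.2, inner_sub_right, real_inner_smul_right, h02]
                  simpa using mul_ne_zero hc0 (hadj 0 (by omega))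
                · have : g 1 = f 2 - c • f 1 ∧ g 2 = f 3 := by simp [hg]
                  rw [this.1, this.2, inner_sub_left, real_inner_smul_left, h13]
                  simpa using hadj 2 (by omega)
              · have e1 : g i = f (i + 1) := by
                  simp only [hg]; rw [if_neg (by omega), if_neg (by omega)]
                have e2 : g (i + 1) = f (i + 2) := by
                  simp only [hg]; rw [if_neg (by omega), if_neg (by omega)]
                rw [e1, e2]; exact hadj (i + 1) (by omega)
          · -- shortcut f 1 ~ f 3
            set g : ℕ → E := fun i => if i ≤ 1 then f i else f (i + 1) with hg
            have hgend : g (n + 2) = f (n + 3) := by simp [hg]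
            rw [← hgend]
            refine ih (n + 2) (by omega) g (by simpa [hg] using h0) (by simpa [hg] using h0V)
              ?_ ?_
            · intro i hi
              by_cases h' : i ≤ 1
              · simpa [hg, h'] using hm i (by omega)
              · simpa [hg, h'] using hm (i + 1) (by omega)
            · intro i hi
              rcases Nat.lt_or_ge i 2 with h' | h'
              · interval_cases i
                · have : g 0 = f 0 ∧ g 1 = f 1 := by simp [hg]
                  rw [this.1, this.2]; exact hadj 0 (by omega)
                · have : g 1 = f 1 ∧ g 2 = f 3 := by simp [hg]
                  rw [this.1, this.2]; exact h13
              · have e1 : g i = f (i + 1) := by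
                  simp only [hg]; rw [if_neg (by omega)]
                have e2 : g (i + 1) = f (i + 2) := by
                  simp only [hg]; rw [if_neg (by omega)]
                rw [e1, e2]; exact hadj (i + 1) (by omega)
        · -- shortcut f 0 ~ f 2
          set g : ℕ → E := fun i => if i = 0 then f 0 else f (i + 1) with hg
          have hgend : g (n + 2) = f (n + 3) := by simp [hg]
          rw [← hgend]
          refine ih (n + 2) (by omega) g (by simpa [hg] using h0) (by simpa [hg] using h0V)
            ?_ ?_
          · intro i hi
            by_cases h' : i = 0
            · simpa [hg, h'] using h0
            · simpa [hg, h'] using hm (i + 1) (by omega)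
          · intro i hi
            by_cases h' : i = 0
            · subst h'
              have : g 0 = f 0 ∧ g 1 = f 2 := by simp [hg]
              rw [this.1, this.2]; exact h02
            · have e1 : g i = f (i + 1) := by simp [hg, h']
              have e2 : g (i + 1) = f (i + 2) := by simp [hg]
              rw [e1, e2]; exact hadj (i + 1) (by omega)
  -- Assemble: partition R by chain-connectivity to R \ V and contradict irreducibility
  obtain ⟨α₀, hα₀R, hα₀W⟩ := hA
  obtain ⟨β₀, hβ₀R, hβ₀V⟩ := hB
  set R₂ : Set E := {x | x ∈ R ∧ ∃ n : ℕ, ∃ f : ℕ → E, f 0 ∈ R ∧ f 0 ∉ V ∧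
    (∀ i ≤ n, f i ∈ R) ∧ (∀ i < n, ⟪f i, f (i + 1)⟫ ≠ 0) ∧ f n = x} with hR₂
  have hR₂W : ∀ x ∈ R₂, x ∈ W := by
    rintro x ⟨hx, n, f, h0, h0V, hmf, hadj, rfl⟩
    exact key n f h0 h0V hmf hadj
  refine hirr (R \ R₂) R₂ ?_ ?_ ?_ ?_
  · exact Set.diff_union_of_subset (fun x hx => hx.1)
  · exact ⟨α₀, hα₀R, fun h => hα₀W (hR₂W _ h)⟩
  · exact ⟨β₀, hβ₀R, 0, fun _ => β₀, hβ₀R, hβ₀V, fun _ _ => hβ₀R,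
      fun i h => absurd h (Nat.not_lt_zero i), rfl⟩
  · intro a ha b hb
    by_contra hab
    apply ha.2
    obtain ⟨hbR, n, f, h0, h0V, hmf, hadj, hfn⟩ := hb
    refine ⟨ha.1, n + 1, fun i => if i ≤ n then f i else a, ?_, ?_, ?_, ?_, ?_⟩
    · simpa using h0
    · simpa using h0V
    · intro i hi
      by_cases h' : i ≤ n
      · simpa [h'] using hmf i h'
      · simpa [h'] using ha.1
    · intro i hi
      by_cases h' : i = n
      · subst h'
        have e1 : (if i ≤ i then f i else a) = f i := by simp
        have e2 : (if i + 1 ≤ i then f (i + 1) else a) = a := by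
          rw [if_neg (by omega)]
        simp only [e1, e2]
        rw [hfn]
        exact fun h'' => hab (by rw [real_inner_comm]; exact h'')
      · have hlt : i < n := by omega
        have e1 : (if i ≤ n then f i else a) = f i := by simp [Nat.le_of_lt hlt]
        have e2 : (if i + 1 ≤ n then f (i + 1) else a) = f (i + 1) := by
          rw [if_pos (by omega)]
        simp only [e1, e2]
        exact hadj i hlt
    · simp
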